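/- Let h : [0,∞) → ℝ be left-continuous with lower Lipschitz bound (h(t)-h(s))/(t-s) ≥ -(β+2ε) for t ≥ s (with β, ε > 0), satisfying h(t) ≥ -2εt for all t and h(t_j) ≤ -εt_j along a sequence t_j → ∞ with t_{j+1} ≥ 10 t_j. Then the decrement set of h⁻ (the complement of the set where the running infimum h⁻ is locally constant) satisfies: for each j, the Lebesgue measure of the decrement moments in [t_j, t_{j+1}] is at least ε t_{j+1} / (4(β + 2ε)). -/

import Mathlib

open Set MeasureTheory Filter Topology

/-- Estimate (2.21): the decrement set is large.  If `h` is left-continuous on `[0,∞)` with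
lower Lipschitz bound `-(β+2ε)`, `h(t) ≥ -2εt` everywhere, and `h(t_j) ≤ -ε t_j` along a
sequence with `t_{j+1} ≥ 10 t_j`, then for each `j` the set of decrement moments of the
running infimum `h⁻` inside `[t_j, t_{j+1}]` has Lebesgue measure at least
`ε t_{j+1} / (4(β+2ε))`. -/
theorem decrement_set_large
    (β ε : ℝ) (hβ : 0 < β) (hε : 0 < ε) (h : ℝ → ℝ)
    (hLip : ∀ s t : ℝ, 0 ≤ s → s ≤ t → h t - h s ≥ -(β + 2 * ε) * (t - s))
    (hleft : ∀ t : ℝ, 0 < t → ContinuousWithinAt h (Set.Iic t) t)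
    (hbelow : ∀ t : ℝ, 0 ≤ t → h t ≥ -2 * ε * t)
    (t : ℕ → ℝ) (ht0 : 0 < t 0) (htgrow : ∀ j, 10 * t j ≤ t (j + 1))
    (habove : ∀ j, h (t j) ≤ -ε * t j)
    (hm : ℝ → ℝ)
    (hhm : ∀ s : ℝ, 0 ≤ s → hm s = sInf (h '' Set.Icc 0 s)) :
    ∀ j : ℕ,
      ENNReal.ofReal (ε * t (j + 1) / (4 * (β + 2 * ε))) ≤
        volume {s : ℝ | s ∈ Set.Icc (t j) (t (j + 1)) ∧
          ¬ ∃ a b : ℝ, a < s ∧ s < b ∧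
            ∀ u ∈ Set.Ioo a b ∩ Set.Ici (0:ℝ), hm u = hm s} := by
  intro j
  set L : ℝ := β + 2 * ε with hLdef
  have hL0 : 0 < L := by positivity
  have htpos : ∀ k, 0 < t k := by
    intro k
    induction k with
    | zero => exact ht0
    | succ n ih => have := htgrow n; nlinarith
  set a := t j with hadef
  set b := t (j + 1) with hbdef
  have ha0 : 0 < a := htpos j
  have hb0 : 0 < b := htpos (j + 1)
  have h10 : 10 * a ≤ b := htgrow j
  have hab : a ≤ b := by nlinarith
  -- basic facts about hm
  have hbdd : ∀ s : ℝ, 0 ≤ s → ∀ x ∈ h '' Icc 0 s, -2 * ε * s ≤ x := by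
    rintro s hs x ⟨u, ⟨hu0, hus⟩, rfl⟩
    have := hbelow u hu0
    nlinarith
  have hne : ∀ s : ℝ, 0 ≤ s → (h '' Icc 0 s).Nonempty :=
    fun s hs => ⟨h 0, 0, ⟨le_refl 0, hs⟩, rfl⟩
  have hm_le_h : ∀ s : ℝ, 0 ≤ s → hm s ≤ h s := by
    intro s hs
    rw [hhm s hs]
    exact csInf_le ⟨-2 * ε * s, hbdd s hs⟩ ⟨s, ⟨hs, le_refl s⟩, rfl⟩
  have hm_ge : ∀ s : ℝ, 0 ≤ s → -2 * ε * s ≤ hm s := by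
    intro s hs
    rw [hhm s hs]
    exact le_csInf (hne s hs) (hbdd s hs)
  have hm_anti : ∀ s u : ℝ, 0 ≤ s → s ≤ u → hm u ≤ hm s := by
    intro s u hs hsu
    rw [hhm s hs, hhm u (hs.trans hsu)]
    exact csInf_le_csInf ⟨-2 * ε * u, hbdd u (hs.trans hsu)⟩ (hne s hs)
      (image_mono (Icc_subset_Icc le_rfl hsu))
  have hm_lip_one : ∀ s u : ℝ, 0 ≤ s → s ≤ u → hm s - L * (u - s) ≤ hm u := by
    intro s u hs hsu
    rw [hhm u (hs.trans hsu)]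
    apply le_csInf (hne u (hs.trans hsu))
    rintro x ⟨v, ⟨hv0, hvu⟩, rfl⟩
    rcases le_or_gt v s with hvs | hvs
    · have h1 : hm s ≤ h v := by
        rw [hhm s hs]
        exact csInf_le ⟨-2 * ε * s, hbdd s hs⟩ ⟨v, ⟨hv0, hvs⟩, rfl⟩
      nlinarith
    · have h1 := hLip s v hs hvs.le
      have h2 := hm_le_h s hs
      nlinarith
  have hm_lipOn : LipschitzOnWith L.toNNReal hm (Ici (0 : ℝ)) := by
    rw [lipschitzOnWith_iff_dist_le_mul]
    intro x hx y hy
    rw [Real.dist_eq, Real.dist_eq, Real.coe_toNNReal _ hL0.le]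
    rcases le_total x y with hxy | hxy
    · have h1 := hm_anti x y hx hxy
      have h2 := hm_lip_one x y hx hxy
      rw [abs_of_nonneg (by linarith), abs_of_nonpos (by linarith), neg_sub]
      nlinarith
    · have h1 := hm_anti y x hy hxy
      have h2 := hm_lip_one y x hy hxy
      rw [abs_of_nonpos (by linarith), abs_of_nonneg (by linarith), neg_sub]
      nlinarith
  have hIcc_sub : Icc a b ⊆ Ici (0 : ℝ) := fun s hs => le_trans ha0.le hs.1
  have hcont : ContinuousOn hm (Icc a b) :=
    (hm_lipOn.continuousOn).mono hIcc_sub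
  -- key numeric bounds
  have hmb : hm b ≤ -ε * b := le_trans (hm_le_h b hb0.le) (habove (j + 1))
  have hma : -2 * ε * a ≤ hm a := hm_ge a ha0.le
  have hDelta : ε * b * (4 / 5) ≤ hm a - hm b := by nlinarith
  -- sets
  set D : Set ℝ := {s : ℝ | s ∈ Set.Icc a b ∧
      ¬ ∃ p q : ℝ, p < s ∧ s < q ∧
        ∀ u ∈ Set.Ioo p q ∩ Set.Ici (0:ℝ), hm u = hm s} with hDdef
  set C : Set ℝ := {s : ℝ | s ∈ Set.Icc a b ∧
      ∃ p q : ℝ, p < s ∧ s < q ∧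
        ∀ u ∈ Set.Ioo p q ∩ Set.Ici (0:ℝ), hm u = hm s} with hCdef
  have hsub : Icc a b ⊆ D ∪ C := by
    intro s hs
    by_cases hc : ∃ p q : ℝ, p < s ∧ s < q ∧
        ∀ u ∈ Set.Ioo p q ∩ Set.Ici (0:ℝ), hm u = hm s
    · exact Or.inr ⟨hs, hc⟩
    · exact Or.inl ⟨hs, hc⟩
  have hCimg : hm '' C ⊆ Set.range (fun r : ℚ => hm (r : ℝ)) := by
    rintro x ⟨s, ⟨⟨hsa, hsb⟩, p, q, hps, hsq, hconst⟩, rfl⟩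
    have hs0 : 0 < s := lt_of_lt_of_le ha0 hsa
    obtain ⟨r, hr1, hr2⟩ := exists_rat_btwn (show max p 0 < s from max_lt hps hs0)
    exact ⟨r, hconst r ⟨⟨lt_of_le_of_lt (le_max_left p 0) hr1, hr2.trans hsq⟩,
      le_of_lt (lt_of_le_of_lt (le_max_right p 0) hr1)⟩⟩
  have hC0 : volume (hm '' C) = 0 :=
    measure_mono_null hCimg ((Set.countable_range _).measure_zero volume)
  have hDimg : volume (hm '' D) ≤ ENNReal.ofReal L * volume D := by
    have hDsub : D ⊆ Ici (0 : ℝ) := fun s hs => hIcc_sub hs.1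
    have := (hm_lipOn.mono hDsub).hausdorffMeasure_image_le (d := 1) zero_le_one
    simpa [hausdorffMeasure_real, ENNReal.rpow_one, ENNReal.ofReal] using this
  have himage : Icc (hm b) (hm a) ⊆ hm '' Icc a b := intermediate_value_Icc' hab hcont
  have h1 : ENNReal.ofReal (hm a - hm b) ≤ volume (hm '' Icc a b) := by
    calc ENNReal.ofReal (hm a - hm b) = volume (Icc (hm b) (hm a)) := by
          rw [Real.volume_Icc]
      _ ≤ volume (hm '' Icc a b) := measure_mono himage
  have h2 : volume (hm '' Icc a b) ≤ ENNReal.ofReal L * volume D := by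
    calc volume (hm '' Icc a b) ≤ volume (hm '' D ∪ hm '' C) := by
          apply measure_mono
          rw [← image_union]
          exact image_mono hsub
      _ ≤ volume (hm '' D) + volume (hm '' C) := measure_union_le _ _
      _ = volume (hm '' D) := by rw [hC0, add_zero]
      _ ≤ ENNReal.ofReal L * volume D := hDimg
  have hfinal : ENNReal.ofReal L * ENNReal.ofReal (ε * b / (4 * L)) ≤
      ENNReal.ofReal L * volume D := by
    calc ENNReal.ofReal L * ENNReal.ofReal (ε * b / (4 * L))
        = ENNReal.ofReal (L * (ε * b / (4 * L))) := (ENNReal.ofReal_mul hL0.le).symm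
      _ ≤ ENNReal.ofReal (hm a - hm b) := by
          apply ENNReal.ofReal_le_ofReal
          have heq : L * (ε * b / (4 * L)) = ε * b / 4 := by
            field_simp
          rw [heq]
          nlinarith
      _ ≤ volume (hm '' Icc a b) := h1
      _ ≤ ENNReal.ofReal L * volume D := h2
  have := (ENNReal.mul_le_mul_iff_right (by simp [hL0]) ENNReal.ofReal_ne_top).mp hfinal
  exact this
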